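/- For all positive integers r and n with r odd, L_r * (∑_{k=1}^n L_{2rk}) = 5 * F_{rn} * F_{rn+r} if n is even, and L_r * (∑_{k=1}^n L_{2rk}) = L_{rn} * L_{rn+r} if n is odd. -/

import Mathlib

open Finset

def L : ℕ → ℤ
  | 0 => 2
  | 1 => 1
  | n + 2 => L (n + 1) + L n

def F (n : ℕ) : ℤ := Nat.fib n

lemma L_two (n : ℕ) : L (n+2) = L (n+1) + L n := rfl

lemma F_two (n : ℕ) : F (n+2) = F (n+1) + F n := by
  unfold F; push_cast [Nat.fib_add_two]; ring

lemma mulL (n : ℕ) : ∀ m, L (m + n) * L n = L (m + 2*n) + (-1:ℤ)^n * L m := by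
  induction n using Nat.twoStepInduction with
  | zero => intro m; simp [L]; ring
  | one =>
    intro m
    rw [show m + 2*1 = m+2 by omega, L_two]
    simp [L]
  | more n ih1 ih2 =>
    intro m
    have h1 := ih1 m
    have h2 := ih1 (m+1)
    have h4 := ih2 (m+1)
    rw [show m+1+n = m+n+1 by omega, show m+1+2*n = m+2*n+1 by omega] at h2
    rw [show m+1+(n+1) = m+n+2 by omega, show m+1+2*(n+1) = m+2*n+3 by omega,
        L_two (m+n), show m+2*n+3 = (m+2*n+1)+2 by omega, L_two,
        show m+2*n+1+1 = (m+2*n)+2 by omega, L_two] at h4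
    rw [show m+(n+2) = (m+n)+2 by omega, L_two, L_two n,
        show m+2*(n+2) = (m+2*n+2)+2 by omega, L_two,
        show m+2*n+2+1 = (m+2*n+1)+2 by omega, L_two,
        show m+2*n+2 = (m+2*n)+2 by omega, L_two]
    rw [pow_succ, pow_succ] at *
    linear_combination h1 + h2 + h4

lemma fiveF (k : ℕ) : 5 * F (k+1) = L (k+2) + L k := by
  induction k using Nat.twoStepInduction with
  | zero => simp [F, L]
  | one => simp [F, L]
  | more k ih1 ih2 =>
    have e : k+1+1 = k+2 := by omega
    rw [L_two (k+1), e] at ih2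
    rw [show k+2+1 = (k+1)+2 by omega, F_two,
        show k+2+2 = (k+2)+2 from rfl, L_two (k+2),
        show k+2+1 = (k+1)+2 by omega, L_two (k+1), e]
    rw [L_two k] at *
    linear_combination ih1 + ih2

lemma mulF (n : ℕ) : ∀ m, 5 * F (m + n) * F n = L (m + 2*n) - (-1:ℤ)^n * L m := by
  induction n using Nat.twoStepInduction with
  | zero => intro m; simp [F]
  | one =>
    intro m
    rw [show m + 2*1 = m+2 by omega]
    have := fiveF m
    simp only [F, Nat.fib_one, Nat.cast_one] at *
    linear_combination this
  | more n ih1 ih2 =>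
    intro m
    have h1 := ih1 m
    have h2 := ih1 (m+1)
    have h4 := ih2 (m+1)
    rw [show m+1+n = m+n+1 by omega, show m+1+2*n = m+2*n+1 by omega] at h2
    rw [show m+1+(n+1) = m+n+2 by omega, show m+1+2*(n+1) = m+2*n+3 by omega,
        F_two (m+n), show m+2*n+3 = (m+2*n+1)+2 by omega, L_two,
        show m+2*n+1+1 = (m+2*n)+2 by omega, L_two] at h4
    rw [show m+(n+2) = (m+n)+2 by omega, F_two, F_two n,
        show m+2*(n+2) = (m+2*n+2)+2 by omega, L_two,
        show m+2*n+2+1 = (m+2*n+1)+2 by omega, L_two,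
        show m+2*n+2 = (m+2*n)+2 by omega, L_two]
    rw [pow_succ, pow_succ] at *
    linear_combination h1 + h2 + h4

lemma tele (r : ℕ) (hro : Odd r) :
    ∀ n, 1 ≤ n → L r * ∑ k ∈ Finset.Icc 1 n, L (2*r*k) = L (r*(2*n+1)) - L r := by
  intro n hn
  induction n, hn using Nat.le_induction with
  | base =>
    simp only [Finset.Icc_self, Finset.sum_singleton, mul_one]
    have h := mulL r r
    rw [show r + r = 2*r by omega, show r + 2*r = r*(2*1+1) by ring, hro.neg_one_pow] at h
    linarith [h]
  | succ n hn ih =>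
    rw [Finset.sum_Icc_succ_top (by omega : 1 ≤ n+1)]
    have h := mulL r (r*(2*n+1))
    rw [show r*(2*n+1) + r = 2*r*(n+1) by ring, show r*(2*n+1) + 2*r = r*(2*(n+1)+1) by ring,
        hro.neg_one_pow] at h
    rw [mul_add, ih]
    linarith [h]

theorem stmt3 (r n : ℕ) (hr : 0 < r) (hn : 0 < n) (hro : Odd r) :
    (Even n → L r * ∑ k ∈ Finset.Icc 1 n, L (2 * r * k) = 5 * F (r * n) * F (r * n + r)) ∧
    (Odd n → L r * ∑ k ∈ Finset.Icc 1 n, L (2 * r * k) = L (r * n) * L (r * n + r)) := by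
  have key := tele r hro n hn
  constructor
  · intro he
    have h := mulF (r*n) r
    rw [show r + r*n = r*n + r by ring, show r + 2*(r*n) = r*(2*n+1) by ring,
        (he.mul_left r).neg_one_pow] at h
    rw [key]
    linear_combination -h
  · intro ho
    have h := mulL (r*n) r
    rw [show r + r*n = r*n + r by ring, show r + 2*(r*n) = r*(2*n+1) by ring,
        (hro.mul ho).neg_one_pow] at h
    rw [key]
    linear_combination -h
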